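/- For every integer L ≥ 2, the periodic Hamiltonian H is hermitian (Hᴴ = H) and its entrywise complex conjugate satisfies H̄ = −H. Consequently, if H v = E v with v ≠ 0, then E is real and H v̄ = −E v̄, so the energy spectrum is symmetric about zero. -/

import Mathlib

open Matrix
open scoped Kronecker ComplexConjugate

noncomputable section

/-- The local two-site Hamiltonian 𝔥 = Σ_γ i(E^{γ(1)}_{γ(2)} ⊗ E^{γ(2)}_{γ(3)}
− E^{γ(2)}_{γ(3)} ⊗ E^{γ(1)}_{γ(2)}), summed over permutations γ of {1,2,3}. -/
def hloc : Matrix (Fin 3 × Fin 3) (Fin 3 × Fin 3) ℂ :=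
  ∑ γ : Equiv.Perm (Fin 3),
    Complex.I •
      ((Matrix.single (γ 0) (γ 1) (1 : ℂ)) ⊗ₖ (Matrix.single (γ 1) (γ 2) (1 : ℂ))
        - (Matrix.single (γ 1) (γ 2) (1 : ℂ)) ⊗ₖ (Matrix.single (γ 0) (γ 1) (1 : ℂ)))

def ind (a b : Fin 3) : ℂ := if a = b then 1 else 0

lemma ind_pair (A B : Prop) [Decidable A] [Decidable B] :
    (if A ∧ B then (1 : ℂ) else 0) = (if A then (1 : ℂ) else 0) * (if B then (1 : ℂ) else 0) := by
  by_cases hA : A <;> by_cases hB : B <;> simp [hA, hB]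

lemma hloc_apply (p1 p2 q1 q2 : Fin 3) :
    hloc (p1, p2) (q1, q2) =
      ∑ γ : Equiv.Perm (Fin 3), Complex.I *
        (ind (γ 0) p1 * ind (γ 1) q1 * ind (γ 1) p2 * ind (γ 2) q2
          - ind (γ 1) p1 * ind (γ 2) q1 * ind (γ 0) p2 * ind (γ 1) q2) := by
  simp only [hloc, Matrix.sum_apply, Matrix.smul_apply, Matrix.sub_apply,
    Matrix.kroneckerMap_apply, smul_eq_mul, Matrix.single, Matrix.of_apply, ind_pair]
  refine Finset.sum_congr rfl fun γ _ => ?_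
  simp only [ind]
  ring

lemma hloc_conj (p q : Fin 3 × Fin 3) : conj (hloc p q) = - hloc p q := by
  rcases p with ⟨p1, p2⟩; rcases q with ⟨q1, q2⟩
  rw [hloc_apply, map_sum, ← Finset.sum_neg_distrib]
  refine Finset.sum_congr rfl fun γ _ => ?_
  simp only [_root_.map_mul, map_sub, Complex.conj_I, ind, apply_ite (starRingEnd ℂ),
    _root_.map_one, map_zero]
  ring

lemma hloc_anti (p q : Fin 3 × Fin 3) : hloc q p = - hloc p q := by
  rcases p with ⟨p1, p2⟩; rcases q with ⟨q1, q2⟩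
  rw [hloc_apply, hloc_apply, ← Finset.sum_neg_distrib]
  refine Fintype.sum_equiv (Equiv.mulRight (Equiv.swap 0 2)) _ _ fun γ => ?_
  have h0 : (γ * Equiv.swap (0 : Fin 3) 2) 0 = γ 2 := by simp
  have h1 : (γ * Equiv.swap (0 : Fin 3) 2) 1 = γ 1 := by
    rw [Equiv.Perm.mul_apply, Equiv.swap_apply_of_ne_of_ne (by decide) (by decide)]
  have h2 : (γ * Equiv.swap (0 : Fin 3) 2) 2 = γ 0 := by simp
  rw [Equiv.coe_mulRight] at *
  rw [h0, h1, h2]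
  ring

/-- Cyclic successor on Fin L. -/
def cyc {L : ℕ} (m : Fin L) : Fin L := ⟨(m.val + 1) % L, Nat.mod_lt _ m.pos⟩

/-- The two-site Hamiltonian 𝔥_{k,l}, acting as 𝔥 on the (ordered) pair of
tensor factors (k,l) and as the identity elsewhere. -/
def hTwo (L : ℕ) (k l : Fin L) : Matrix (Fin L → Fin 3) (Fin L → Fin 3) ℂ :=
  Matrix.of fun α β =>
    hloc (α k, α l) (β k, β l) *
      ∏ m ∈ Finset.univ \ {k, l}, (if α m = β m then (1 : ℂ) else 0)

/-- The periodic Hamiltonian H = Σ_{k=1}^{L−1} 𝔥_{k,k+1} + 𝔥_{L,1}; written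
cyclically as Σ_{k∈Fin L} 𝔥_{k,k+1 mod L}. -/
def Ham (L : ℕ) : Matrix (Fin L → Fin 3) (Fin L → Fin 3) ℂ :=
  ∑ k : Fin L, hTwo L k (cyc k)

lemma ham_conj (L : ℕ) (α β : Fin L → Fin 3) : conj (Ham L α β) = - Ham L α β := by
  simp only [Ham, Matrix.sum_apply, hTwo, Matrix.of_apply, map_sum, _root_.map_mul,
    _root_.map_prod, apply_ite (starRingEnd ℂ), _root_.map_one, map_zero, hloc_conj,
    neg_mul, Finset.sum_neg_distrib]

lemma ham_anti (L : ℕ) (α β : Fin L → Fin 3) : Ham L β α = - Ham L α β := by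
  simp only [Ham, Matrix.sum_apply, hTwo, Matrix.of_apply, ← Finset.sum_neg_distrib]
  refine Finset.sum_congr rfl fun k _ => ?_
  rw [hloc_anti, neg_mul]
  congr 2
  exact Finset.prod_congr rfl fun m _ => if_congr eq_comm rfl rfl

open scoped ComplexOrder in
lemma star_dot_ne {n : Type*} [Fintype n] (v : n → ℂ) (hv : v ≠ 0) : star v ⬝ᵥ v ≠ 0 := by
  rw [Ne, dotProduct_star_self_eq_zero]
  exact hv

/-- for L ≥ 2 the periodic Hamiltonian is hermitian, its entrywise
complex conjugate is −H, and consequently every eigenvalue E (for an eigenvector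
v ≠ 0) is real with the conjugate vector an eigenvector of eigenvalue −E. -/
theorem ham_hermitian_and_spectrum_symmetric (L : ℕ) (hL : 2 ≤ L) :
    (Ham L)ᴴ = Ham L ∧
    (Ham L).map (starRingEnd ℂ) = -(Ham L) ∧
    ∀ (v : (Fin L → Fin 3) → ℂ) (E : ℂ), v ≠ 0 → (Ham L).mulVec v = E • v →
      (∃ r : ℝ, E = (r : ℂ)) ∧
        (Ham L).mulVec (fun α => conj (v α)) = (-E) • (fun α => conj (v α)) := by
  have hherm : (Ham L)ᴴ = Ham L := by
    ext α β
    rw [Matrix.conjTranspose_apply]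
    show conj (Ham L β α) = Ham L α β
    rw [ham_conj, ham_anti, neg_neg]
  refine ⟨hherm, ?_, ?_⟩
  · ext α β
    simp [Matrix.map_apply, ham_conj]
  · intro v E hv hEv
    have hc : star v ⬝ᵥ v ≠ 0 := star_dot_ne v hv
    have h1 : star v ⬝ᵥ (Ham L *ᵥ v) = E * (star v ⬝ᵥ v) := by
      rw [hEv]
      simp [dotProduct_smul, smul_eq_mul]
    have h2 : star v ⬝ᵥ (Ham L *ᵥ v) = conj E * (star v ⬝ᵥ v) := by
      rw [Matrix.dotProduct_mulVec, ← hherm, ← Matrix.star_mulVec, hEv]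
      simp [smul_dotProduct, smul_eq_mul, star_smul, Complex.star_def]
    have hEconj : conj E = E := by
      have := h1.symm.trans h2
      have h3 : (E - conj E) * (star v ⬝ᵥ v) = 0 := by rw [sub_mul, this, sub_self]
      rcases mul_eq_zero.mp h3 with h | h
      · exact (sub_eq_zero.mp h).symm
      · exact absurd h hc
    have hreal : ∃ r : ℝ, E = (r : ℂ) := Complex.conj_eq_iff_real.mp hEconj
    refine ⟨hreal, ?_⟩
    funext α
    have hα : ∑ β, Ham L α β * v β = E * v α := by
      have := congrFun hEv α
      simpa [Matrix.mulVec, dotProduct, smul_eq_mul] using this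
    show ∑ β, Ham L α β * conj (v β) = -E * conj (v α)
    calc ∑ β, Ham L α β * conj (v β)
        = conj (∑ β, conj (Ham L α β) * v β) := by
          rw [map_sum]
          exact Finset.sum_congr rfl fun β _ => by
            rw [_root_.map_mul, Complex.conj_conj]
      _ = conj (∑ β, -(Ham L α β * v β)) := by
          congr 1
          exact Finset.sum_congr rfl fun β _ => by rw [ham_conj, neg_mul]
      _ = conj (-(E * v α)) := by rw [Finset.sum_neg_distrib, hα]
      _ = -E * conj (v α) := by
          rw [map_neg, _root_.map_mul, hEconj, neg_mul]

end
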